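/- If the propensity score satisfies 1/e(x) = b₀ + (1/p)·b₁ᵀΣ_t⁻¹(x − μ_t) for all x in the support of X, where p = P(Z=1) = E(e(X)), μ_t = E(X|Z=1), Σ_t = Var(X|Z=1) invertible, then necessarily b₀ = 1/p and b₁ = E(X) − μ_t. -/

import Mathlib

open MeasureTheory Matrix

/-- If the reciprocal propensity score is of the form
`1/e(x) = b₀ + (1/p) b₁ᵀ Σ_t⁻¹ (x − μ_t)` on the support of `X`, where
`p = E(e(X))`, `μ_t = E(X e(X))/p` and `Σ_t = E((X−μ_t)(X−μ_t)ᵀ e(X))/p` is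
invertible, then necessarily `b₀ = 1/p` and `b₁ = E(X) − μ_t`. -/
theorem inverse_linear_propensity_coefficients {k : ℕ}
    {Ω : Type*} [MeasurableSpace Ω] (μ : Measure Ω) [IsProbabilityMeasure μ]
    (X : Ω → Fin k → ℝ) (hX : Measurable X) (hX2 : MemLp X 2 μ)
    (e : Ω → ℝ) (he_meas : Measurable e)
    (he01 : ∀ ω, 0 < e ω ∧ e ω < 1)
    (p : ℝ) (hp : p = ∫ ω, e ω ∂μ) (hp0 : 0 < p) (hp1 : p < 1)
    (μt μall : Fin k → ℝ)
    (hμt : μt = p⁻¹ • ∫ ω, e ω • X ω ∂μ)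
    (hμall : μall = ∫ ω, X ω ∂μ)
    (Sigt : Matrix (Fin k) (Fin k) ℝ)
    (hSigt : ∀ i j, Sigt i j = p⁻¹ * ∫ ω, e ω * ((X ω i - μt i) * (X ω j - μt j)) ∂μ)
    (hSigtinv : IsUnit Sigt.det)
    (b0 : ℝ) (b1 : Fin k → ℝ)
    (hform : ∀ ω, e ω * (b0 + p⁻¹ * (b1 ⬝ᵥ Sigt⁻¹.mulVec (X ω - μt))) = 1) :
    b0 = p⁻¹ ∧ b1 = μall - μt := by
  have hpne : p ≠ 0 := ne_of_gt hp0
  have he_sm : AEStronglyMeasurable e μ := he_meas.aestronglyMeasurable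
  have he_bdd : ∀ ω, ‖e ω‖ ≤ 1 := fun ω => by
    rw [Real.norm_eq_abs, abs_of_pos (he01 ω).1]; exact (he01 ω).2.le
  have hInt_e : Integrable e μ :=
    Integrable.mono' (integrable_const 1) he_sm (Filter.Eventually.of_forall he_bdd)
  have hXint : Integrable X μ := hX2.integrable one_le_two
  have hXi : ∀ i, MemLp (fun ω => X ω i) 2 μ := fun i =>
    (ContinuousLinearMap.proj (R := ℝ) (φ := fun _ : Fin k => ℝ) i).comp_memLp' hX2
  have hdi : ∀ i, MemLp (fun ω => X ω i - μt i) 2 μ := fun i =>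
    (hXi i).sub (memLp_const _)
  have hdiInt : ∀ i, Integrable (fun ω => X ω i - μt i) μ := fun i =>
    (hdi i).integrable one_le_two
  have hIbig : ∀ f : Ω → ℝ, Integrable f μ → Integrable (fun ω => e ω * f ω) μ :=
    fun f hf => hf.bdd_mul he_sm (Filter.Eventually.of_forall he_bdd)
  have hprod : ∀ l j, Integrable (fun ω => (X ω l - μt l) * (X ω j - μt j)) μ := by
    intro l j
    have h := ((hdi j).smul (hdi l) (r := 1) : MemLp ((fun ω => X ω l - μt l) • (fun ω => X ω j - μt j)) 1 μ)
    have := h.integrable le_rfl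
    simpa [Pi.smul_apply, smul_eq_mul, Pi.mul_def] using this
  -- component of μt
  have hcomp : ∀ l, ∫ ω, e ω * X ω l ∂μ = p * μt l := by
    intro l
    have hInteX : Integrable (fun ω => e ω • X ω) μ := by
      have heT : MemLp e ⊤ μ := memLp_top_of_bound he_sm 1 (Filter.Eventually.of_forall he_bdd)
      have hX1 : MemLp X 1 μ := hX2.mono_exponent one_le_two
      exact (hX1.integrable le_rfl).smul_of_top_right heT
    have hproj := (ContinuousLinearMap.proj (R := ℝ) (φ := fun _ : Fin k => ℝ) l).integral_comp_comm hInteX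
    simp only [ContinuousLinearMap.proj_apply, Pi.smul_apply, smul_eq_mul] at hproj
    have hμtl : μt l = p⁻¹ * (∫ ω, e ω • X ω ∂μ) l := by
      rw [hμt]; simp
    rw [hμtl, ← hproj]
    field_simp
  have hzero : ∀ l, ∫ ω, e ω * (X ω l - μt l) ∂μ = 0 := by
    intro l
    have heq : (fun ω => e ω * (X ω l - μt l)) = fun ω => e ω * X ω l - e ω * μt l := by
      funext ω; ring
    rw [heq, integral_sub (hIbig _ ((hXi l).integrable one_le_two)) (hInt_e.mul_const _),
      integral_mul_const, hcomp l, ← hp]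
    ring
  have hSig' : ∀ l j, ∫ ω, e ω * ((X ω l - μt l) * (X ω j - μt j)) ∂μ = p * Sigt l j := by
    intro l j
    rw [hSigt l j]
    field_simp
  set c : Fin k → ℝ := b1 ᵥ* Sigt⁻¹ with hc
  have hform' : ∀ ω, e ω * b0 + p⁻¹ * ∑ l, c l * (e ω * (X ω l - μt l)) = 1 := by
    intro ω
    have h := hform ω
    rw [dotProduct_mulVec] at h
    have hdp : (b1 ᵥ* Sigt⁻¹) ⬝ᵥ (X ω - μt) = ∑ l, c l * (X ω l - μt l) := by
      simp [dotProduct, hc, Pi.sub_apply]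
    rw [hdp] at h
    have hs : ∑ l, c l * (e ω * (X ω l - μt l)) = e ω * ∑ l, c l * (X ω l - μt l) := by
      rw [Finset.mul_sum]
      exact Finset.sum_congr rfl fun l _ => by ring
    rw [hs]
    linear_combination h
  have hI1 : ∀ l, Integrable (fun ω => e ω * (X ω l - μt l)) μ := fun l => hIbig _ (hdiInt l)
  -- integrate to get b0
  have hb0 : b0 = p⁻¹ := by
    have hint1 : Integrable (fun ω => e ω * b0) μ := hInt_e.mul_const b0
    have hint2 : Integrable (fun ω => ∑ l, c l * (e ω * (X ω l - μt l))) μ :=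
      integrable_finset_sum _ fun l _ => (hI1 l).const_mul (c l)
    have key : ∫ ω, (e ω * b0 + p⁻¹ * ∑ l, c l * (e ω * (X ω l - μt l))) ∂μ = 1 := by
      have := integral_congr_ae (μ := μ)
        (Filter.Eventually.of_forall fun ω => hform' ω)
      rw [this]; simp
    rw [integral_add hint1 (hint2.const_mul _), integral_mul_const,
      integral_const_mul, integral_finset_sum _ (fun l _ => (hI1 l).const_mul (c l))] at key
    simp only [integral_const_mul, hzero, mul_zero, Finset.sum_const_zero] at key
    rw [← hp] at key
    field_simp at key ⊢
    linarith
  -- integrate times (X j - μt j) to get b1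
  have hXcomp : ∀ j, ∫ ω, X ω j ∂μ = μall j := by
    intro j
    have hproj := (ContinuousLinearMap.proj (R := ℝ) (φ := fun _ : Fin k => ℝ) j).integral_comp_comm hXint
    simp only [ContinuousLinearMap.proj_apply] at hproj
    rw [hproj, hμall]
  have hb1 : ∀ j, b1 j = μall j - μt j := by
    intro j
    have hsum : ∀ ω, ∑ l, c l * (e ω * ((X ω l - μt l) * (X ω j - μt j)))
        = (X ω j - μt j) * ∑ l, c l * (e ω * (X ω l - μt l)) := by
      intro ω
      rw [Finset.mul_sum]
      exact Finset.sum_congr rfl fun l _ => by ring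
    have hptw : ∀ ω, X ω j - μt j
        = b0 * (e ω * (X ω j - μt j))
          + p⁻¹ * ∑ l, c l * (e ω * ((X ω l - μt l) * (X ω j - μt j))) := by
      intro ω
      rw [hsum ω]
      have h := hform' ω
      set S : ℝ := ∑ l, c l * (e ω * (X ω l - μt l)) with hS
      linear_combination (μt j - X ω j) * h
    have hint1 : Integrable (fun ω => b0 * (e ω * (X ω j - μt j))) μ := (hI1 j).const_mul b0
    have hint2 : Integrable (fun ω => ∑ l, c l * (e ω * ((X ω l - μt l) * (X ω j - μt j)))) μ :=
      integrable_finset_sum _ fun l _ => (hIbig _ (hprod l j)).const_mul (c l)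
    have key : ∫ ω, (X ω j - μt j) ∂μ
        = ∫ ω, (b0 * (e ω * (X ω j - μt j))
          + p⁻¹ * ∑ l, c l * (e ω * ((X ω l - μt l) * (X ω j - μt j)))) ∂μ :=
      integral_congr_ae (Filter.Eventually.of_forall fun ω => hptw ω)
    rw [integral_sub ((hXi j).integrable one_le_two) (integrable_const _),
      integral_const, probReal_univ, smul_eq_mul, one_mul, hXcomp j,
      integral_add hint1 (hint2.const_mul _), integral_const_mul, hzero j, mul_zero,
      integral_const_mul,
      integral_finset_sum _ (fun l _ => (hIbig _ (hprod l j)).const_mul (c l))] at key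
    simp only [integral_const_mul, hSig'] at key
    have hsum2 : p⁻¹ * ∑ l, c l * (p * Sigt l j) = ∑ l, c l * Sigt l j := by
      rw [Finset.mul_sum]
      exact Finset.sum_congr rfl fun l _ => by field_simp
    rw [hsum2] at key
    have hvm : ∑ l, c l * Sigt l j = b1 j := by
      have h1 : c ᵥ* Sigt = b1 := by
        rw [hc, vecMul_vecMul, nonsing_inv_mul _ hSigtinv, vecMul_one]
      have h2 : (c ᵥ* Sigt) j = ∑ l, c l * Sigt l j := by
        simp [vecMul, dotProduct]
      rw [← h2, h1]
    rw [hvm] at key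
    linarith
  refine ⟨hb0, funext fun j => ?_⟩
  rw [hb1 j]; simp
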